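/- If ε·λ_max(L_s + D_ω) < 2, then E is strictly concave on ℝ^{n×K}: for all U ≠ V in ℝ^{n×K} and all t ∈ (0,1), E(tU + (1−t)V) > t·E(U) + (1−t)·E(V). -/

import Mathlib

open Matrix

noncomputable section

/-- The unit simplex `Δ` in `ℝ^K`. -/
def unitSimplex (K : ℕ) : Set (Fin K → ℝ) :=
  {y | (∀ j, 0 ≤ y j) ∧ ∑ j, y j = 1}

/-- `Σ`: matrices in `ℝ^{n×K}` each of whose rows lies in the unit simplex. -/
def SigmaSet (n K : ℕ) : Set (Matrix (Fin n) (Fin K) ℝ) :=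
  {U | ∀ i, U i ∈ unitSimplex K}

/-- `Σ̄`: binary matrices in `Σ`. -/
def SigmaBar (n K : ℕ) : Set (Matrix (Fin n) (Fin K) ℝ) :=
  {U | U ∈ SigmaSet n K ∧ ∀ i j, U i j = 0 ∨ U i j = 1}

/-- Frobenius inner product `⟨A,B⟩ = trace(AᵀB)`. -/
def frobInner {n K : ℕ} (A B : Matrix (Fin n) (Fin K) ℝ) : ℝ :=
  Matrix.trace (Aᵀ * B)

/-- Frobenius norm. -/
def frobNorm {n K : ℕ} (A : Matrix (Fin n) (Fin K) ℝ) : ℝ :=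
  Real.sqrt (∑ i, ∑ j, (A i j) ^ 2)

/-- The energy
`E(U) = (1/2)·trace(Uᵀ Lₛ U) + (1/ε)·Σᵢ uᵢᵀ(𝟙 − uᵢ) + (1/2)·Σᵢ ωᵢ‖ûᵢ − uᵢ‖²`. -/
def En {n K : ℕ} (Ls : Matrix (Fin n) (Fin n) ℝ) (ω : Fin n → ℝ)
    (Uhat : Matrix (Fin n) (Fin K) ℝ) (ε : ℝ) (U : Matrix (Fin n) (Fin K) ℝ) : ℝ :=
  (1 / 2) * Matrix.trace (Uᵀ * Ls * U)
    + (1 / ε) * ∑ i, ∑ j, U i j * (1 - U i j)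
    + (1 / 2) * ∑ i, ω i * ∑ j, (Uhat i j - U i j) ^ 2

/-- The gradient `∇E(U) = Lₛ U + (1/ε)(J − 2U) − D_ω(Û − U)` (`J` the all-ones matrix). -/
def gradE {n K : ℕ} (Ls : Matrix (Fin n) (Fin n) ℝ) (ω : Fin n → ℝ)
    (Uhat : Matrix (Fin n) (Fin K) ℝ) (ε : ℝ) (U : Matrix (Fin n) (Fin K) ℝ) :
    Matrix (Fin n) (Fin K) ℝ :=
  Ls * U + (1 / ε) • (Matrix.of (fun _ _ => (1 : ℝ)) - 2 • U)
    - Matrix.diagonal ω * (Uhat - U)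


private lemma traceSym {n K : ℕ} (M : Matrix (Fin n) (Fin n) ℝ) (hM : Mᵀ = M)
    (U V : Matrix (Fin n) (Fin K) ℝ) :
    trace (Uᵀ*M*V) = trace (Vᵀ*M*U) := by
  rw [← trace_transpose, transpose_mul, transpose_mul, transpose_transpose, hM, Matrix.mul_assoc]

private lemma quadT {n K : ℕ} (M : Matrix (Fin n) (Fin n) ℝ) (hM : Mᵀ = M)
    (A B : Matrix (Fin n) (Fin K) ℝ) (a b : ℝ) :
    trace ((a • A + b • B)ᵀ * M * (a • A + b • B))
      = a*a * trace (Aᵀ*M*A) + 2*a*b*trace (Aᵀ*M*B) + b*b*trace (Bᵀ*M*B) := by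
  simp only [transpose_add, transpose_smul, Matrix.add_mul, Matrix.mul_add, Matrix.smul_mul,
    Matrix.mul_smul, trace_add, trace_smul, smul_eq_mul, smul_smul]
  rw [traceSym M hM B A]
  ring

private lemma gapQ {n K : ℕ} (M : Matrix (Fin n) (Fin n) ℝ) (hM : Mᵀ = M)
    (U V : Matrix (Fin n) (Fin K) ℝ) (t : ℝ) :
    trace ((t • U + (1-t) • V)ᵀ * M * (t • U + (1-t) • V))
      = t * trace (Uᵀ*M*U) + (1-t) * trace (Vᵀ*M*V) - t*(1-t)*trace ((U-V)ᵀ*M*(U-V)) := by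
  have hW : U - V = (1:ℝ) • U + (-1:ℝ) • V := by simp [sub_eq_add_neg]
  rw [hW, quadT M hM, quadT M hM]
  ring

private lemma sum_mul_trace {n K : ℕ} (A B : Matrix (Fin n) (Fin K) ℝ) :
    ∑ i, ∑ j, A i j * B i j = trace (Aᵀ * B) := by
  rw [Matrix.trace, Finset.sum_comm]
  simp [Matrix.mul_apply, Matrix.diag]

private lemma sum_wsq_trace {n K : ℕ} (ω : Fin n → ℝ) (A : Matrix (Fin n) (Fin K) ℝ) :
    ∑ i, ω i * ∑ j, (A i j)^2 = trace (Aᵀ * diagonal ω * A) := by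
  simp only [Matrix.trace, Matrix.diag, Matrix.mul_apply, transpose_apply, diagonal_apply,
    Finset.mul_sum]
  rw [Finset.sum_comm]
  congr 1; ext i
  simp [Finset.sum_ite_eq, sq]
  ring_nf
  congr 1; ext j
  ring

private lemma quad_le_lam (n : ℕ) (H : Matrix (Fin n) (Fin n) ℝ) (hH : H.IsHermitian) (lam : ℝ)
    (hlam : ∀ i, hH.eigenvalues i ≤ lam) (x : Fin n → ℝ) :
    x ⬝ᵥ (H *ᵥ x) ≤ lam * (x ⬝ᵥ x) := by
  set S : Matrix (Fin n) (Fin n) ℝ := (hH.eigenvectorUnitary : Matrix (Fin n) (Fin n) ℝ)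
  have hS : S * star S = 1 := (Matrix.mem_unitaryGroup_iff).mp hH.eigenvectorUnitary.2
  have key : lam • (1 : Matrix (Fin n) (Fin n) ℝ) - H
      = S * diagonal (fun i => lam - hH.eigenvalues i) * star S := by
    conv_lhs => rw [hH.spectral_theorem, Unitary.conjStarAlgAut_apply]
    have h1 : lam • (1 : Matrix (Fin n) (Fin n) ℝ) = S * (lam • (1:Matrix (Fin n) (Fin n) ℝ)) * star S := by
      rw [Matrix.mul_smul, Matrix.smul_mul, Matrix.mul_one, hS]
    rw [h1, ← Matrix.sub_mul, ← Matrix.mul_sub]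
    congr 2
    rw [smul_one_eq_diagonal, ← diagonal_sub]
    congr 1
  have hpsd : ((lam • (1 : Matrix (Fin n) (Fin n) ℝ) - H)).PosSemidef := by
    rw [key]
    exact (Matrix.PosSemidef.mul_mul_conjTranspose_same
      (Matrix.posSemidef_diagonal_iff.mpr fun i => sub_nonneg.mpr (hlam i)) S)
  have h0 := hpsd.dotProduct_mulVec_nonneg x
  simp only [sub_mulVec, smul_mulVec, one_mulVec, dotProduct_sub, dotProduct_smul,
    smul_eq_mul, RCLike.re_to_real, star_trivial] at h0
  linarith [h0]

private lemma trace_quad_cols {n K : ℕ} (H : Matrix (Fin n) (Fin n) ℝ)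
    (W : Matrix (Fin n) (Fin K) ℝ) :
    trace (Wᵀ * H * W) = ∑ j, (fun i => W i j) ⬝ᵥ (H *ᵥ fun i => W i j) := by
  simp only [Matrix.trace, Matrix.diag, Matrix.mul_apply, transpose_apply, dotProduct,
    Matrix.mulVec, Finset.mul_sum, Finset.sum_mul]
  congr 1; ext j
  rw [Finset.sum_comm]
  congr 1; ext i; congr 1; ext k; ring


/-- if `ε·λ_max(Lₛ + D_ω) < 2` then `E` is strictly concave on `ℝ^{n×K}`. -/
theorem En_strictly_concave (n K : ℕ) (hn : 1 ≤ n) (hK : 2 ≤ K)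
    (Ls : Matrix (Fin n) (Fin n) ℝ) (hLs : Ls.PosSemidef)
    (ω : Fin n → ℝ) (hω : ∀ i, 0 ≤ ω i)
    (Uhat : Matrix (Fin n) (Fin K) ℝ) (hUhat : Uhat ∈ SigmaSet n K)
    (ε : ℝ) (hε : 0 < ε)
    (hH : (Ls + Matrix.diagonal ω).IsHermitian)
    (lam : ℝ) (hlam : IsGreatest (Set.range hH.eigenvalues) lam)
    (hsmall : ε * lam < 2) :
    ∀ U V : Matrix (Fin n) (Fin K) ℝ, U ≠ V → ∀ t : ℝ, 0 < t → t < 1 →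
      t * En Ls ω Uhat ε U + (1 - t) * En Ls ω Uhat ε V
        < En Ls ω Uhat ε (t • U + (1 - t) • V) := by
  intro U V hUV t ht0 ht1
  have hLsym : Lsᵀ = Ls := (show Ls.IsSymm by simpa using hLs.1)
  have hDsym : (Matrix.diagonal ω)ᵀ = Matrix.diagonal ω := Matrix.diagonal_transpose ω
  have h1sym : (1 : Matrix (Fin n) (Fin n) ℝ)ᵀ = 1 := Matrix.transpose_one
  -- trace form of En
  have EnForm : ∀ X : Matrix (Fin n) (Fin K) ℝ, En Ls ω Uhat ε X
      = (1/2) * trace (Xᵀ * Ls * X) + (1/ε) * (∑ i, ∑ j, X i j)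
        - (1/ε) * trace (Xᵀ * (1:Matrix (Fin n) (Fin n) ℝ) * X)
        + (1/2) * trace ((Uhat - X)ᵀ * diagonal ω * (Uhat - X)) := by
    intro X
    have h1 : ∑ i, ∑ j, X i j * (1 - X i j)
        = (∑ i, ∑ j, X i j) - trace (Xᵀ * (1:Matrix (Fin n) (Fin n) ℝ) * X) := by
      rw [Matrix.mul_one, ← sum_mul_trace X X]
      rw [← Finset.sum_sub_distrib]
      congr 1; ext i
      rw [← Finset.sum_sub_distrib]
      congr 1; ext j; ring
    have h2 : ∑ i, ω i * ∑ j, (Uhat i j - X i j) ^ 2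
        = trace ((Uhat - X)ᵀ * diagonal ω * (Uhat - X)) := by
      rw [← sum_wsq_trace]
      simp [Matrix.sub_apply]
    simp only [En]
    rw [h1, h2]
    ring
  set Z : Matrix (Fin n) (Fin K) ℝ := t • U + (1 - t) • V with hZ
  -- gap identity
  have hUZ : Uhat - Z = t • (Uhat - U) + (1 - t) • (Uhat - V) := by
    ext i j
    simp [hZ, Matrix.sub_apply, Matrix.add_apply, Matrix.smul_apply]
    ring
  have hVU : (Uhat - U) - (Uhat - V) = -(U - V) := by abel
  have htrneg : trace ((-(U-V))ᵀ * diagonal ω * (-(U-V)))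
      = trace ((U-V)ᵀ * diagonal ω * (U-V)) := by
    rw [transpose_neg, Matrix.neg_mul, Matrix.mul_neg, Matrix.neg_mul, neg_neg]
  have hlin : ∑ i, ∑ j, Z i j = t * (∑ i, ∑ j, U i j) + (1-t) * (∑ i, ∑ j, V i j) := by
    simp [hZ, Matrix.add_apply, Matrix.smul_apply, Finset.sum_add_distrib, Finset.mul_sum]
  have hid : En Ls ω Uhat ε Z
      = t * En Ls ω Uhat ε U + (1-t) * En Ls ω Uhat ε V
        + t*(1-t) * ((1/ε) * trace ((U-V)ᵀ * (1:Matrix (Fin n) (Fin n) ℝ) * (U-V))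
          - (1/2) * trace ((U-V)ᵀ * Ls * (U-V))
          - (1/2) * trace ((U-V)ᵀ * diagonal ω * (U-V))) := by
    rw [EnForm Z, EnForm U, EnForm V, hZ, gapQ Ls hLsym, gapQ 1 h1sym, hlin]
    rw [show Uhat - (t • U + (1 - t) • V) = t • (Uhat - U) + (1 - t) • (Uhat - V) from hUZ]
    rw [gapQ (diagonal ω) hDsym, hVU, htrneg]
    ring
  -- positivity of ‖W‖²
  have hW0 : U - V ≠ 0 := sub_ne_zero.mpr hUV
  obtain ⟨i0, j0, hij⟩ : ∃ i j, (U - V) i j ≠ 0 := by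
    by_contra h
    push_neg at h
    exact hW0 (by ext i j; simpa using h i j)
  have ha : 0 < trace ((U-V)ᵀ * (1:Matrix (Fin n) (Fin n) ℝ) * (U-V)) := by
    rw [Matrix.mul_one, ← sum_mul_trace]
    apply Finset.sum_pos'
    · exact fun i _ => Finset.sum_nonneg fun j _ => mul_self_nonneg _
    · exact ⟨i0, Finset.mem_univ _, Finset.sum_pos'
        (fun j _ => mul_self_nonneg _) ⟨j0, Finset.mem_univ _, mul_self_pos.mpr hij⟩⟩
  -- spectral bound
  have hcols : trace ((U-V)ᵀ * Ls * (U-V)) + trace ((U-V)ᵀ * diagonal ω * (U-V))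
      ≤ lam * trace ((U-V)ᵀ * (1:Matrix (Fin n) (Fin n) ℝ) * (U-V)) := by
    have hsum : trace ((U-V)ᵀ * Ls * (U-V)) + trace ((U-V)ᵀ * diagonal ω * (U-V))
        = trace ((U-V)ᵀ * (Ls + diagonal ω) * (U-V)) := by
      rw [Matrix.mul_add, Matrix.add_mul, trace_add]
    rw [hsum, trace_quad_cols, trace_quad_cols]
    calc ∑ j, (fun i => (U-V) i j) ⬝ᵥ ((Ls + diagonal ω) *ᵥ fun i => (U-V) i j)
        ≤ ∑ j, lam * ((fun i => (U-V) i j) ⬝ᵥ fun i => (U-V) i j) := by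
          apply Finset.sum_le_sum
          intro j _
          exact quad_le_lam n (Ls + diagonal ω) hH lam (fun i => hlam.2 ⟨i, rfl⟩) _
      _ = lam * ∑ j, (fun i => (U-V) i j) ⬝ᵥ ((1:Matrix (Fin n) (Fin n) ℝ) *ᵥ fun i => (U-V) i j) := by
          rw [Finset.mul_sum]
          congr 1; ext j
          rw [one_mulVec]
  -- finish
  have htt : 0 < t * (1 - t) := mul_pos ht0 (by linarith)
  have hinv : (0:ℝ) < 1/ε := by positivity
  set a := trace ((U-V)ᵀ * (1:Matrix (Fin n) (Fin n) ℝ) * (U-V))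
  set bL := trace ((U-V)ᵀ * Ls * (U-V))
  set bD := trace ((U-V)ᵀ * diagonal ω * (U-V))
  have hkey : (1/2) * (bL + bD) < (1/ε) * a := by
    have h3 : ε * lam * a < 2 * a := mul_lt_mul_of_pos_right hsmall ha
    have h4 : (1/ε) * (ε * lam * a) = lam * a := by field_simp
    have h5 : (1/ε) * (ε * lam * a) < (1/ε) * (2 * a) :=
      mul_lt_mul_of_pos_left h3 hinv
    rw [h4] at h5
    nlinarith [hcols]
  rw [hid]
  nlinarith [mul_pos htt (by linarith : (0:ℝ) < (1/ε) * a - (1/2) * bL - (1/2) * bD)]
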